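/- Let D = {z ∈ ℂ² : |z₁| < 1, |z₁³⁴·z₂⁵⁵| < 1}. The convex hull of D is 𝔻 × ℂ, and hence the Minkowski function of the convex hull is ĥ_D(z) = |z₁|. -/

import Mathlib

/-- The Minkowski function of a set `D ⊂ ℂ²`: `h_D(z) = inf {t > 0 : z/t ∈ D}`. -/
noncomputable def mink (D : Set (ℂ × ℂ)) (z : ℂ × ℂ) : ℝ :=
  sInf {t : ℝ | 0 < t ∧ t⁻¹ • z ∈ D}

/-- Example 7: for `D = {z ∈ ℂ² : |z₁| < 1, |z₁³⁴z₂⁵⁵| < 1}`, the convex hull of `D`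
is `𝔻 × ℂ`, and the Minkowski function of the convex hull is `z ↦ |z₁|`. -/
theorem stmt14 (D : Set (ℂ × ℂ))
    (hD : D = {z : ℂ × ℂ | ‖z.1‖ < 1 ∧ ‖z.1 ^ 34 * z.2 ^ 55‖ < 1}) :
    convexHull ℝ D = {z : ℂ × ℂ | ‖z.1‖ < 1} ∧
    ∀ z : ℂ × ℂ, mink (convexHull ℝ D) z = ‖z.1‖ := by
  have habs : ∀ (r : ℝ) (w : ℂ), ‖r • w‖ = |r| * ‖w‖ := by
    intro r w
    rw [norm_smul, Real.norm_eq_abs]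
  have hs : Convex ℝ {z : ℂ × ℂ | ‖z.1‖ < 1} := by
    have heq : {z : ℂ × ℂ | ‖z.1‖ < 1}
        = (LinearMap.fst ℝ ℂ ℂ) ⁻¹' Metric.ball 0 1 := by
      ext z
      simp [Metric.mem_ball, Complex.dist_eq]
    rw [heq]
    exact (convex_ball (0:ℂ) 1).linear_preimage _
  have hsub : convexHull ℝ D ⊆ {z : ℂ × ℂ | ‖z.1‖ < 1} := by
    refine convexHull_min ?_ hs
    rw [hD]; intro z hz; exact hz.1
  have hsup : {z : ℂ × ℂ | ‖z.1‖ < 1} ⊆ convexHull ℝ D := by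
    intro z hz
    simp only [Set.mem_setOf_eq] at hz
    set t : ℝ := (1 - ‖z.1‖) / 2 with ht
    set a : ℝ := (1 + ‖z.1‖) / 2 with ha
    have ht0 : 0 < t := by
      rw [ht]; linarith
    have ha0 : 0 < a := by
      have := norm_nonneg z.1
      rw [ha]; linarith
    have hlt : ‖z.1‖ < a := by
      rw [ha]; linarith
    have hat : a + t = 1 := by rw [ha, ht]; ring
    have hp : (((a⁻¹ : ℝ) • z.1, (0 : ℂ)) : ℂ × ℂ) ∈ D := by
      rw [hD]
      constructor
      · show ‖(a⁻¹ : ℝ) • z.1‖ < 1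
        rw [habs, abs_of_pos (inv_pos.mpr ha0)]
        rw [inv_mul_lt_iff₀ ha0, mul_one]
        exact hlt
      · show ‖_ * (0:ℂ) ^ 55‖ < 1
        simp
    have hq : (((0 : ℂ), (t⁻¹ : ℝ) • z.2) : ℂ × ℂ) ∈ D := by
      rw [hD]
      refine ⟨by simp, ?_⟩
      show ‖(0:ℂ) ^ 34 * _‖ < 1
      simp
    have hseg : z ∈ segment ℝ (((a⁻¹ : ℝ) • z.1, (0 : ℂ)) : ℂ × ℂ)
        (((0 : ℂ), (t⁻¹ : ℝ) • z.2) : ℂ × ℂ) := by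
      refine ⟨a, t, ha0.le, ht0.le, hat, ?_⟩
      have : (a • ((a⁻¹ : ℝ) • z.1, (0 : ℂ)) + t • ((0 : ℂ), (t⁻¹ : ℝ) • z.2) : ℂ × ℂ)
          = (z.1, z.2) := by
        ext
        · simp only [Prod.smul_fst, Prod.smul_snd, Prod.fst_add, smul_zero,
            Complex.real_smul, Complex.ofReal_inv]
          rw [← mul_assoc, mul_inv_cancel₀ (Complex.ofReal_ne_zero.mpr ha0.ne'), one_mul]
          simp
        · simp only [Prod.smul_fst, Prod.smul_snd, Prod.snd_add, smul_zero,
            Complex.real_smul, Complex.ofReal_inv]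
          rw [← mul_assoc, mul_inv_cancel₀ (Complex.ofReal_ne_zero.mpr ht0.ne'), one_mul]
          simp
      rw [this]
    exact segment_subset_convexHull hp hq hseg
  have hhull : convexHull ℝ D = {z : ℂ × ℂ | ‖z.1‖ < 1} :=
    le_antisymm hsub hsup
  refine ⟨hhull, fun z => ?_⟩
  rw [hhull]
  unfold mink
  have hset : {t : ℝ | 0 < t ∧ t⁻¹ • z ∈ {z : ℂ × ℂ | ‖z.1‖ < 1}}
      = Set.Ioi (‖z.1‖) := by
    ext t
    simp only [Set.mem_setOf_eq, Set.mem_Ioi]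
    constructor
    · rintro ⟨ht, h⟩
      have : ‖(t⁻¹ : ℝ) • z.1‖ < 1 := h
      rw [habs, abs_of_pos (inv_pos.mpr ht), inv_mul_lt_iff₀ ht, mul_one] at this
      exact this
    · intro h
      have ht : 0 < t := lt_of_le_of_lt (norm_nonneg _) h
      refine ⟨ht, ?_⟩
      show ‖(t⁻¹ : ℝ) • z.1‖ < 1
      rw [habs, abs_of_pos (inv_pos.mpr ht), inv_mul_lt_iff₀ ht, mul_one]
      exact h
  rw [hset, csInf_Ioi]
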